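/- Let G be an undirected graph with minimum degree at least k+1 that contains k pairwise vertex-disjoint cycles. Then G admits a partition of its vertex set into k parts such that every vertex has at least 2 neighbors within its own part. -/

import Mathlib

open Finset

lemma cycle_two_nbrs_start {V : Type} {G : SimpleGraph V} {v : V} {c : G.Walk v v}
    (hc : c.IsCycle) :
    ∃ a b, a ≠ b ∧ G.Adj v a ∧ G.Adj v b ∧ a ∈ c.support ∧ b ∈ c.support := by
  cases c with
  | nil => exact absurd rfl hc.ne_nil
  | @cons _ y _ h p =>
    have hp : p.IsPath := ((SimpleGraph.Walk.cons_isCycle_iff p h).mp hc).1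
    have hlen : 2 ≤ p.length := by
      have := hc.three_le_length
      simp only [SimpleGraph.Walk.length_cons] at this
      omega
    have hnn : ¬ p.reverse.Nil := by
      rw [SimpleGraph.Walk.not_nil_iff_lt_length, SimpleGraph.Walk.length_reverse]
      omega
    obtain ⟨b, h', q, hq⟩ := SimpleGraph.Walk.not_nil_iff.mp hnn
    have hbmem : b ∈ p.support := by
      have : b ∈ p.reverse.support := by
        rw [hq]; simp [SimpleGraph.Walk.support_cons]
      rwa [SimpleGraph.Walk.support_reverse, List.mem_reverse] at this
    refine ⟨y, b, ?_, h, h', ?_, ?_⟩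
    · rintro rfl
      have hqpath : q.IsPath := by
        have : p.reverse.IsPath := hp.reverse
        rw [hq] at this
        exact this.of_cons
      have hqnil : q = SimpleGraph.Walk.nil := (SimpleGraph.Walk.isPath_iff_eq_nil (p := q)).mp hqpath
      have : p.reverse.length = 1 := by rw [hq, hqnil]; simp
      rw [SimpleGraph.Walk.length_reverse] at this
      omega
    · simp [SimpleGraph.Walk.support_cons, SimpleGraph.Walk.start_mem_support]
    · simp [SimpleGraph.Walk.support_cons]
      right; exact hbmem

lemma cycle_two_nbrs {V : Type} [DecidableEq V] {G : SimpleGraph V} {x : V} {c : G.Walk x x}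
    (hc : c.IsCycle) {v : V} (hv : v ∈ c.support) :
    ∃ a b, a ≠ b ∧ G.Adj v a ∧ G.Adj v b ∧ a ∈ c.support ∧ b ∈ c.support := by
  obtain ⟨a, b, hab, ha, hb, has, hbs⟩ := cycle_two_nbrs_start (hc.rotate hv)
  have key : ∀ (y z : V) (d : G.Walk y y), ¬d.Nil → (z ∈ d.support ↔ z ∈ d.support.tail) := by
    intro y z d hd
    cases d with
    | nil => simp at hd
    | cons h p =>
      simp only [SimpleGraph.Walk.support_cons, List.tail_cons, List.mem_cons]
      constructor
      · rintro (rfl | hz)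
        · exact p.end_mem_support
        · exact hz
      · exact Or.inr
  have hrot := (SimpleGraph.Walk.support_rotate c v hv).mem_iff (a := a)
  have hrot' := (SimpleGraph.Walk.support_rotate c v hv).mem_iff (a := b)
  refine ⟨a, b, hab, ha, hb, ?_, ?_⟩
  · exact (key x a c hc.not_nil).mpr (hrot.mp ((key v a _ (hc.rotate hv).not_nil).mp has))
  · exact (key x b c hc.not_nil).mpr (hrot'.mp ((key v b _ (hc.rotate hv).not_nil).mp hbs))

/-- Let `G` be an undirected graph with minimum degree at least `k+1` that contains `k`
pairwise vertex-disjoint cycles. Then `G` admits a partition of its vertex set into `k`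
(nonempty) parts such that every vertex has at least 2 neighbors within its own part. -/
theorem stmt_6 {V : Type} [Fintype V] [DecidableEq V]
    (G : SimpleGraph V) [DecidableRel G.Adj] (k : ℕ) (hk : 0 < k)
    (hdeg : ∀ v : V, k + 1 ≤ G.degree v)
    (hcyc : ∃ (u : Fin k → V) (w : (i : Fin k) → G.Walk (u i) (u i)),
      (∀ i, (w i).IsCycle) ∧
      ∀ i j, i ≠ j → ∀ x ∈ (w i).support, x ∉ (w j).support) :
    ∃ P : V → Fin k, Function.Surjective P ∧
      ∀ v : V, 2 ≤ ((G.neighborFinset v).filter (fun u => P u = P v)).card := by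
  classical
  obtain ⟨u, w, hcycs, hdisj⟩ := hcyc
  set S : Finset (V → Fin k) :=
    Finset.univ.filter (fun P => ∀ i, ∀ x ∈ (w i).support, P x = i) with hSdef
  have hSne : S.Nonempty := by
    refine ⟨fun x => if h : ∃ i, x ∈ (w i).support then h.choose else ⟨0, hk⟩, ?_⟩
    simp only [hSdef, Finset.mem_filter, Finset.mem_univ, true_and]
    intro i x hx
    have h : ∃ i, x ∈ (w i).support := ⟨i, hx⟩
    rw [dif_pos h]
    by_contra hne
    exact hdisj _ _ hne x h.choose_spec hx
  -- the weight of a pair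
  set q : (V → Fin k) → V → V → ℕ :=
    fun Q x y => if G.Adj x y ∧ Q y = Q x then 1 else 0 with hqdef
  set F : (V → Fin k) → ℕ := fun Q => ∑ x, ∑ y, q Q x y with hFdef
  obtain ⟨P, hPS, hPmax⟩ := S.exists_max_image F hSne
  have hP : ∀ i, ∀ x ∈ (w i).support, P x = i := by
    simpa only [hSdef, Finset.mem_filter, Finset.mem_univ, true_and] using hPS
  have hcard : ∀ (Q : V → Fin k) (x : V),
      ((G.neighborFinset x).filter (fun z => Q z = Q x)).card = ∑ y, q Q x y := by
    intro Q x
    rw [SimpleGraph.neighborFinset_eq_filter, Finset.filter_filter, Finset.card_filter]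
  refine ⟨P, ?_, ?_⟩
  · intro i
    exact ⟨u i, hP i (u i) ((w i).start_mem_support)⟩
  intro v
  by_cases hv : ∃ i, v ∈ (w i).support
  · obtain ⟨i, hvi⟩ := hv
    obtain ⟨a, b, hab, ha, hb, has, hbs⟩ := cycle_two_nbrs (hcycs i) hvi
    refine Finset.one_lt_card.mpr ⟨a, ?_, b, ?_, hab⟩ <;>
      simp only [Finset.mem_filter, SimpleGraph.mem_neighborFinset]
    · exact ⟨ha, by rw [hP i a has, hP i v hvi]⟩
    · exact ⟨hb, by rw [hP i b hbs, hP i v hvi]⟩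
  · push_neg at hv
    by_contra hlt
    push_neg at hlt
    have ha1 : ((G.neighborFinset v).filter (fun z => P z = P v)).card ≤ 1 := by omega
    -- pigeonhole: some class sees at least 2 neighbors of v
    have htot : ∑ j : Fin k, ((G.neighborFinset v).filter (fun z => P z = j)).card
        = G.degree v :=
      (Finset.card_eq_sum_card_fiberwise (fun x _ => Finset.mem_univ (P x))).symm
    have hexj : ∃ j : Fin k, 2 ≤ ((G.neighborFinset v).filter (fun z => P z = j)).card := by
      by_contra hall
      push_neg at hall
      have : ∑ j : Fin k, ((G.neighborFinset v).filter (fun z => P z = j)).card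
          ≤ ∑ _j : Fin k, 1 :=
        Finset.sum_le_sum (fun j _ => by have := hall j; omega)
      simp only [Finset.sum_const, Finset.card_univ, Fintype.card_fin, smul_eq_mul, mul_one]
        at this
      have := hdeg v
      omega
    obtain ⟨j, hj⟩ := hexj
    set P' : V → Fin k := Function.update P v j with hP'def
    have hP'S : P' ∈ S := by
      simp only [hSdef, Finset.mem_filter, Finset.mem_univ, true_and]
      intro i x hx
      have hxv : x ≠ v := fun h => hv i (h ▸ hx)
      rw [hP'def, Function.update_of_ne hxv, hP i x hx]
    -- decomposition of F
    have hqcomm : ∀ (Q : V → Fin k) (x : V), q Q x v = q Q v x := by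
      intro Q x
      have hiff : (G.Adj x v ∧ Q v = Q x) ↔ (G.Adj v x ∧ Q x = Q v) :=
        and_congr (G.adj_comm x v) eq_comm
      simp only [hqdef, hiff]
    have hqvv : ∀ Q : V → Fin k, q Q v v = 0 := by
      intro Q; simp [hqdef]
    have hdecomp : ∀ Q : V → Fin k,
        F Q = (∑ x ∈ Finset.univ.erase v, ∑ y ∈ Finset.univ.erase v, q Q x y)
          + 2 * ∑ y, q Q v y := by
      intro Q
      have h1 : (∑ x ∈ Finset.univ.erase v, ∑ y, q Q x y) + ∑ y, q Q v y = F Q :=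
        Finset.sum_erase_add _ _ (Finset.mem_univ v)
      have h2 : ∀ x, (∑ y ∈ Finset.univ.erase v, q Q x y) + q Q x v = ∑ y, q Q x y :=
        fun x => Finset.sum_erase_add _ _ (Finset.mem_univ v)
      have h3 : (∑ y ∈ Finset.univ.erase v, q Q v y) + q Q v v = ∑ y, q Q v y :=
        Finset.sum_erase_add _ _ (Finset.mem_univ v)
      have h4 : ∑ x ∈ Finset.univ.erase v, ∑ y, q Q x y
          = (∑ x ∈ Finset.univ.erase v, ∑ y ∈ Finset.univ.erase v, q Q x y)
            + ∑ x ∈ Finset.univ.erase v, q Q x v := by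
        rw [← Finset.sum_add_distrib]
        exact Finset.sum_congr rfl (fun x _ => (h2 x).symm)
      have h5 : ∑ x ∈ Finset.univ.erase v, q Q x v = ∑ x ∈ Finset.univ.erase v, q Q v x :=
        Finset.sum_congr rfl (fun x _ => hqcomm Q x)
      have h6 := hqvv Q
      omega
    -- core sums agree
    have hcore : (∑ x ∈ Finset.univ.erase v, ∑ y ∈ Finset.univ.erase v, q P x y)
        = ∑ x ∈ Finset.univ.erase v, ∑ y ∈ Finset.univ.erase v, q P' x y := by
      refine Finset.sum_congr rfl (fun x hx => Finset.sum_congr rfl (fun y hy => ?_))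
      have hxv : x ≠ v := Finset.ne_of_mem_erase hx
      have hyv : y ≠ v := Finset.ne_of_mem_erase hy
      simp only [hqdef, hP'def, Function.update_of_ne hxv, Function.update_of_ne hyv]
    -- the new own-class count
    have hb2 : ∑ y, q P' v y = ((G.neighborFinset v).filter (fun z => P z = j)).card := by
      rw [← hcard P' v]
      congr 1
      apply Finset.filter_congr
      intro z hz
      have hzv : z ≠ v := fun h => G.irrefl (h ▸ (SimpleGraph.mem_neighborFinset G v z).mp hz)
      simp [hP'def, Function.update_of_ne hzv, Function.update_self]
    have hFP := hdecomp P
    have hFP' := hdecomp P'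
    have haeq := hcard P v
    have hle := hPmax P' hP'S
    omega
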